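/- Let F be a frame for F^n with k ≥ n vectors and G a dual frame such that n²/k + Σ_{i,j: i≠j} |⟨f_i, g_j⟩|² ≥ n. Then μ(Gr(F,G))² ≥ (n - n²/k)/(k(k-1)). -/
import Mathlib


open scoped InnerProductSpace ComplexInnerProductSpace
open Finset

noncomputable section

abbrev Esp (n : ℕ) := EuclideanSpace ℂ (Fin n)

/-- A frame for a finite-dimensional Hilbert space: a finite spanning family. -/
def IsFrame {n k : ℕ} (f : Fin k → Esp n) : Prop :=
  Submodule.span ℂ (Set.range f) = ⊤

/-- `h` is a dual frame of `f`: `∑ i ⟨x, h i⟩ f i = x` for all `x`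
(paper convention `⟨·,·⟩` linear in the first slot, i.e. `⟪h i, x⟫` in Mathlib). -/
def IsDualFrame {n k : ℕ} (f h : Fin k → Esp n) : Prop :=
  IsFrame h ∧ ∀ x : Esp n, ∑ i, (⟪h i, x⟫_ℂ) • f i = x

/-- `g` is the canonical dual of the frame `f`, i.e. `g i = S⁻¹ (f i)` where
`S x = ∑ j ⟨x, f j⟩ f j` is the frame operator; equivalently `S (g i) = f i`. -/
def IsCanonicalDual {n k : ℕ} (f g : Fin k → Esp n) : Prop :=
  ∀ i, ∑ j, (⟪f j, g i⟫_ℂ) • f j = f i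

/-- Cross frame potential `P_F(G) = ∑_{i,j} |⟨f i, g j⟩|²`. -/
def crossPot {n k : ℕ} (f g : Fin k → Esp n) : ℝ :=
  ∑ i, ∑ j, ‖(⟪f i, g j⟫_ℂ)‖ ^ 2

/-- The maximal off-diagonal magnitude `μ(Gr(F,G)) = max_{i ≠ j} |⟨f i, g j⟩|`. -/
def muOffDiag {n k : ℕ} (f g : Fin k → Esp n) : ℝ :=
  ⨆ p : {p : Fin k × Fin k // p.1 ≠ p.2}, ‖(⟪g (p : Fin k × Fin k).2, f (p : Fin k × Fin k).1⟫_ℂ)‖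

/-- partial proof of the conjectured Welch-type bound, under the
assumption (b): `n²/k + ∑_{i ≠ j} |⟨f i, g j⟩|² ≥ n`. -/
theorem mu_sq_lower_bound {n k : ℕ} (f g : Fin k → Esp n)
    (hf : IsFrame f) (hk : n ≤ k) (hg : IsDualFrame f g)
    (hb : (n : ℝ) ≤ (n : ℝ) ^ 2 / k +
      ∑ i, ∑ j ∈ Finset.univ \ {i}, ‖(⟪g j, f i⟫_ℂ)‖ ^ 2) :
    ((n : ℝ) - (n : ℝ) ^ 2 / k) / ((k : ℝ) * ((k : ℝ) - 1)) ≤ muOffDiag f g ^ 2 := by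
  rcases le_or_gt k 1 with hk1 | hk1
  · have h0 : ((k:ℝ) * ((k:ℝ) - 1)) = 0 := by
      interval_cases k <;> norm_num
    rw [h0, div_zero]
    exact sq_nonneg _
  · have hkpos : (0:ℝ) < (k:ℝ) * ((k:ℝ) - 1) := by
      have h2 : (2:ℝ) ≤ (k:ℝ) := by exact_mod_cast hk1
      nlinarith
    rw [div_le_iff₀ hkpos]
    have hμ : ∀ i j : Fin k, i ≠ j → ‖(⟪g j, f i⟫_ℂ)‖ ≤ muOffDiag f g := by
      intro i j hij
      have := le_ciSup (f := fun p : {p : Fin k × Fin k // p.1 ≠ p.2} =>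
          ‖(⟪g (p : Fin k × Fin k).2, f (p : Fin k × Fin k).1⟫_ℂ)‖)
        (Set.Finite.bddAbove (Set.finite_range _)) ⟨(i, j), hij⟩
      exact this
    have hsum : ∑ i, ∑ j ∈ Finset.univ \ {i}, ‖(⟪g j, f i⟫_ℂ)‖ ^ 2
        ≤ (k:ℝ) * ((k:ℝ) - 1) * muOffDiag f g ^ 2 := by
      have hstep : ∑ i, ∑ j ∈ Finset.univ \ {i}, ‖(⟪g j, f i⟫_ℂ)‖ ^ 2
          ≤ ∑ _i : Fin k, ∑ _j ∈ (Finset.univ \ ({_i} : Finset (Fin k))), muOffDiag f g ^ 2 := by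
        apply Finset.sum_le_sum
        intro i _
        apply Finset.sum_le_sum
        intro j hj
        have hij : i ≠ j := by
          simp only [Finset.mem_sdiff, Finset.mem_singleton] at hj
          exact fun h => hj.2 h.symm
        have h1 := hμ i j hij
        have h2 : (0:ℝ) ≤ ‖(⟪g j, f i⟫_ℂ)‖ := norm_nonneg _
        nlinarith
      have hcard : ∀ i : Fin k, (Finset.univ \ ({i} : Finset (Fin k))).card = k - 1 := by
        intro i
        rw [Finset.card_sdiff_of_subset (by simp)]
        simp
      calc _ ≤ _ := hstep
        _ = (k:ℝ) * ((k:ℝ) - 1) * muOffDiag f g ^ 2 := by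
            simp only [Finset.sum_const, hcard, nsmul_eq_mul, Finset.card_univ, Fintype.card_fin]
            have : ((k - 1 : ℕ) : ℝ) = (k:ℝ) - 1 := by
              rw [Nat.cast_sub (le_of_lt hk1)]; norm_num
            rw [this]; ring
    linarith
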